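/- Fix a permutation v ∈ S_∞ and k ≥ 1. The set of saturated chains γ in the k-Bruhat order starting at v with cover labels (a_1,b_1),...,(a_q,b_q) satisfying b_1 ≥ b_2 ≥ ... ≥ b_q is finite. In particular, in such a chain no label (a_i,b_i) can repeat: (a_i,b_i) ≠ (a_j,b_j) for i ≠ j. -/

import Mathlib

noncomputable section

/-- The length (number of inversions) of a finitely supported permutation of ℕ. -/
def len (w : Equiv.Perm ℕ) : ℕ := Set.ncard {p : ℕ × ℕ | p.1 < p.2 ∧ w p.2 < w p.1}

/-- `IsKChain k v L` : the list of transposition labels `L = [(a_1,b_1),...,(a_q,b_q)]`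
describes a saturated chain in the `k`-Bruhat order starting at `v`: each step is a Bruhat
cover `u ⋖ u·(a_i,b_i)` with `a_i ≤ k < b_i` (positions being positive integers). -/
def IsKChain (k : ℕ) : Equiv.Perm ℕ → List (ℕ × ℕ) → Prop
  | _, [] => True
  | v, p :: t => 0 < p.1 ∧ p.1 ≤ k ∧ k < p.2 ∧
      len (v * Equiv.swap p.1 p.2) = len v + 1 ∧ IsKChain k (v * Equiv.swap p.1 p.2) t

/-- The endpoint of the chain starting at `v` with transposition labels `L`. -/
def chainEnd : Equiv.Perm ℕ → List (ℕ × ℕ) → Equiv.Perm ℕ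
  | v, [] => v
  | v, p :: t => chainEnd (v * Equiv.swap p.1 p.2) t

/-- The order `≺` on labels of covers: `(a,b) ≺ (c,d)` iff `b > d`, or `b = d` and `a < c`. -/
def prec (p q : ℕ × ℕ) : Prop := q.2 < p.2 ∨ (q.2 = p.2 ∧ p.1 < q.1)

/-- Condition (P1): `b_1 ≥ b_2 ≥ ... ≥ b_q` (0-indexed list access). -/
def CondP1 (L : List (ℕ × ℕ)) : Prop :=
  ∀ t, t + 1 < L.length → (L.getD (t+1) (0,0)).2 ≤ (L.getD t (0,0)).2

/-- Condition (P0): for `2 ≤ i ≤ q-1` (1-indexed; here `t = i-1` is the 0-indexed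
position, so `1 ≤ t` and `t + 2 ≤ q`), if `a_j = a_i` for some `j < i`, then
`(a_i,b_i) ≺ (a_{i+1},b_{i+1})`. -/
def CondP0 (L : List (ℕ × ℕ)) : Prop :=
  ∀ t, 1 ≤ t → t + 2 ≤ L.length →
    (∃ s, s < t ∧ (L.getD s (0,0)).1 = (L.getD t (0,0)).1) →
    prec (L.getD t (0,0)) (L.getD (t+1) (0,0))

namespace KB

def Inv (w : Equiv.Perm ℕ) : Set (ℕ × ℕ) := {p | p.1 < p.2 ∧ w p.2 < w p.1}

lemma len_eq (w : Equiv.Perm ℕ) : len w = (Inv w).ncard := rfl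

def FixAbove (w : Equiv.Perm ℕ) (n : ℕ) : Prop := ∀ i, n < i → w i = i

lemma apply_le {w : Equiv.Perm ℕ} {n : ℕ} (h : FixAbove w n) {i : ℕ} (hi : i ≤ n) : w i ≤ n := by
  by_contra hc
  push_neg at hc
  have h2 := h _ hc
  have := w.injective h2
  omega

lemma inv_subset {w : Equiv.Perm ℕ} {n : ℕ} (h : FixAbove w n) :
    Inv w ⊆ (Finset.Iic n ×ˢ Finset.Iic n : Finset (ℕ × ℕ)) := by
  rintro ⟨p, q⟩ ⟨h1, h2⟩
  simp only at h1 h2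
  have hq : q ≤ n := by
    by_contra hq
    push_neg at hq
    have hwq : w q = q := h q hq
    rcases le_or_gt p n with hp | hp
    · have : w p ≤ n := apply_le h hp
      omega
    · have hwp : w p = p := h p hp
      omega
  simp only [Finset.coe_product, Set.mem_prod, Finset.mem_coe, Finset.mem_Iic]
  exact ⟨by omega, hq⟩

lemma inv_finite {w : Equiv.Perm ℕ} {n : ℕ} (h : FixAbove w n) : (Inv w).Finite :=
  Set.Finite.subset (Finset.Iic n ×ˢ Finset.Iic n).finite_toSet (inv_subset h)

lemma exists_fixAbove {w : Equiv.Perm ℕ} (hw : {i | w i ≠ i}.Finite) (k : ℕ) :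
    ∃ n, k ≤ n ∧ FixAbove w n := by
  obtain ⟨m, hm⟩ := hw.bddAbove
  refine ⟨max k m, le_max_left _ _, fun i hi => ?_⟩
  by_contra hc
  have : i ≤ m := hm hc
  omega

lemma inv_finite' {w : Equiv.Perm ℕ} (hw : {i | w i ≠ i}.Finite) : (Inv w).Finite := by
  obtain ⟨n, _, h⟩ := exists_fixAbove hw 0
  exact inv_finite h

lemma len_le {w : Equiv.Perm ℕ} {n : ℕ} (h : FixAbove w n) : len w ≤ (n+1) * (n+1) := by
  rw [len_eq]
  calc (Inv w).ncard ≤ ((Finset.Iic n ×ˢ Finset.Iic n : Finset (ℕ × ℕ)) : Set (ℕ × ℕ)).ncard :=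
        Set.ncard_le_ncard (inv_subset h) (Finset.Iic n ×ˢ Finset.Iic n).finite_toSet
    _ = (n+1) * (n+1) := by
        rw [Set.ncard_coe_finset, Finset.card_product, Nat.card_Iic]

lemma support_mul_swap {u : Equiv.Perm ℕ} {a b : ℕ} (hu : {i | u i ≠ i}.Finite) :
    {i | (u * Equiv.swap a b) i ≠ i}.Finite := by
  apply Set.Finite.subset (hu.union (Set.finite_singleton a |>.insert b))
  intro i hi
  simp only [Set.mem_setOf_eq, Equiv.Perm.mul_apply] at hi
  simp only [Set.mem_union, Set.mem_setOf_eq, Set.mem_insert_iff, Set.mem_singleton_iff]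
  by_contra hc
  push_neg at hc
  obtain ⟨h1, h2, h3⟩ := hc
  rw [Equiv.swap_apply_of_ne_of_ne h3 h2] at hi
  exact hi (not_not.mp (by simpa using h1))

section Key
variable (a b : ℕ)

/-- The injection from `Inv u` into `Inv (u * swap a b)`. -/
def keyMap (p : ℕ × ℕ) : ℕ × ℕ :=
  if (a < p.1 ∧ p.1 < b) ∨ (a < p.2 ∧ p.2 < b) then p
  else (Equiv.swap a b p.1, Equiv.swap a b p.2)

variable {u : Equiv.Perm ℕ} {a b}

lemma key_mem (hab : a < b) (hu : u a < u b) {p : ℕ × ℕ} (hp : p ∈ Inv u) :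
    keyMap a b p ∈ Inv (u * Equiv.swap a b) := by
  obtain ⟨p₁, p₂⟩ := p
  obtain ⟨h1, h2⟩ := hp
  simp only at h1 h2
  unfold keyMap
  split_ifs with hcond
  · -- inside case: keyMap = identity
    refine ⟨h1, ?_⟩
    simp only [Equiv.Perm.mul_apply]
    rcases eq_or_ne p₁ a with rfl | hpa
    · -- p₁ = a, so a < p₂ < b (second disjunct), p₂ ≠ a, b
      have hin : p₁ < p₂ ∧ p₂ < b := by
        rcases hcond with ⟨h, _⟩ | h
        · omega
        · exact ⟨h1, h.2⟩
      rw [Equiv.swap_apply_left, Equiv.swap_apply_of_ne_of_ne (by omega) (by omega)]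
      exact lt_trans h2 hu
    · rcases eq_or_ne p₂ b with rfl | hpb
      · -- p₂ = b : a < p₁ < b
        have hin : a < p₁ ∧ p₁ < p₂ := by
          rcases hcond with h | ⟨h, h'⟩
          · exact ⟨h.1, h1⟩
          · omega
        rw [Equiv.swap_apply_right, Equiv.swap_apply_of_ne_of_ne hpa (by omega)]
        exact lt_trans hu h2
      · -- neither endpoint is a or b
        have hp1b : p₁ ≠ b := by
          rintro rfl
          rcases hcond with h | h <;> omega
        have hp2a : p₂ ≠ a := by
          rintro rfl
          rcases hcond with h | h <;> omega
        rw [Equiv.swap_apply_of_ne_of_ne hpa hp1b, Equiv.swap_apply_of_ne_of_ne hp2a hpb]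
        exact h2
  · -- outside case
    push_neg at hcond
    obtain ⟨hc1, hc2⟩ := hcond
    constructor
    · -- swap preserves order here
      simp only
      rcases eq_or_ne p₁ a with rfl | hpa
      · rw [Equiv.swap_apply_left]
        have hp2b : p₂ ≠ b := by
          rintro rfl
          exact absurd h2 (not_lt.mpr (le_of_lt hu))
        have : b < p₂ := by
          have := hc2 (by omega)
          omega
        rw [Equiv.swap_apply_of_ne_of_ne (by omega) hp2b]
        exact this
      · rcases eq_or_ne p₁ b with rfl | hpb
        · rw [Equiv.swap_apply_right]
          rw [Equiv.swap_apply_of_ne_of_ne (by omega) (by omega)]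
          omega
        · rw [Equiv.swap_apply_of_ne_of_ne hpa hpb]
          rcases eq_or_ne p₂ a with rfl | hqa
          · rw [Equiv.swap_apply_left]; omega
          · rcases eq_or_ne p₂ b with rfl | hqb
            · rw [Equiv.swap_apply_right]
              have : p₁ < a := by
                have := hc1
                omega
              exact this
            · rw [Equiv.swap_apply_of_ne_of_ne hqa hqb]; exact h1
    · simp only [Equiv.Perm.mul_apply, Equiv.swap_apply_self]
      exact h2

lemma key_outside_not_inside {p : ℕ × ℕ}
    (hc : ¬((a < p.1 ∧ p.1 < b) ∨ (a < p.2 ∧ p.2 < b))) :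
    ¬((a < Equiv.swap a b p.1 ∧ Equiv.swap a b p.1 < b) ∨
      (a < Equiv.swap a b p.2 ∧ Equiv.swap a b p.2 < b)) := by
  push_neg at hc ⊢
  obtain ⟨hc1, hc2⟩ := hc
  constructor
  · intro h1
    by_contra hlt
    push_neg at hlt
    have heq : Equiv.swap a b (Equiv.swap a b p.1) = Equiv.swap a b p.1 :=
      Equiv.swap_apply_of_ne_of_ne (by omega) (by omega)
    rw [Equiv.swap_apply_self] at heq
    have := hc1 (by omega)
    omega
  · intro h1
    by_contra hlt
    push_neg at hlt
    have heq : Equiv.swap a b (Equiv.swap a b p.2) = Equiv.swap a b p.2 :=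
      Equiv.swap_apply_of_ne_of_ne (by omega) (by omega)
    rw [Equiv.swap_apply_self] at heq
    have := hc2 (by omega)
    omega

lemma key_inj : Set.InjOn (keyMap a b) (Inv u) := by
  rintro p _ q _ h
  unfold keyMap at h
  split_ifs at h with h1 h2 h2
  · exact h
  · exfalso
    have hq := key_outside_not_inside (a := a) (b := b) (p := q) h2
    have e1 : p.1 = Equiv.swap a b q.1 := congrArg Prod.fst h
    have e2 : p.2 = Equiv.swap a b q.2 := congrArg Prod.snd h
    rw [e1, e2] at h1
    exact hq h1
  · exfalso
    have hp := key_outside_not_inside (a := a) (b := b) (p := p) h1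
    have e1 : Equiv.swap a b p.1 = q.1 := congrArg Prod.fst h
    have e2 : Equiv.swap a b p.2 = q.2 := congrArg Prod.snd h
    rw [e1, e2] at hp
    exact hp h2
  · have e1 : Equiv.swap a b p.1 = Equiv.swap a b q.1 := congrArg Prod.fst h
    have e2 : Equiv.swap a b p.2 = Equiv.swap a b q.2 := congrArg Prod.snd h
    have f1 := (Equiv.swap a b).injective e1
    have f2 := (Equiv.swap a b).injective e2
    exact Prod.ext f1 f2

lemma key_ab_not_mem (hab : a < b) (hu : u a < u b) : (a, b) ∉ keyMap a b '' Inv u := by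
  rintro ⟨⟨p₁, p₂⟩, hp, he⟩
  unfold keyMap at he
  split_ifs at he with hcond
  · obtain ⟨h1, h2⟩ := hp
    cases he
    simp only at h2
    exact absurd h2 (not_lt.mpr (le_of_lt hu))
  · have e1 : Equiv.swap a b p₁ = a := congrArg Prod.fst he
    have e2 : Equiv.swap a b p₂ = b := congrArg Prod.snd he
    have f1 : p₁ = b := by
      have := congrArg (Equiv.swap a b) e1
      rwa [Equiv.swap_apply_self, Equiv.swap_apply_left] at this
    have f2 : p₂ = a := by
      have := congrArg (Equiv.swap a b) e2
      rwa [Equiv.swap_apply_self, Equiv.swap_apply_right] at this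
    obtain ⟨h1, _⟩ := hp
    simp only at h1
    omega

lemma key_ab_mem (hab : a < b) (hu : u a < u b) : (a, b) ∈ Inv (u * Equiv.swap a b) := by
  refine ⟨hab, ?_⟩
  simp only [Equiv.Perm.mul_apply, Equiv.swap_apply_left, Equiv.swap_apply_right]
  exact hu

lemma key_ac_not_mem {c : ℕ} (hac : a < c) (hcb : c < b) (hyc : u a < u c) :
    (a, c) ∉ keyMap a b '' Inv u := by
  rintro ⟨⟨p₁, p₂⟩, hp, he⟩
  unfold keyMap at he
  split_ifs at he with hcond
  · obtain ⟨h1, h2⟩ := hp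
    cases he
    simp only at h2
    exact absurd h2 (not_lt.mpr (le_of_lt hyc))
  · have hno := key_outside_not_inside (a := a) (b := b) (p := (p₁, p₂)) hcond
    have e1 : Equiv.swap a b p₁ = a := congrArg Prod.fst he
    have e2 : Equiv.swap a b p₂ = c := congrArg Prod.snd he
    simp only at hno
    rw [e1, e2] at hno
    push_neg at hno
    have := hno.2 hac
    omega

lemma key_ac_mem {c : ℕ} (hac : a < c) (hcb : c < b) (hcz : u c < u b) :
    (a, c) ∈ Inv (u * Equiv.swap a b) := by
  refine ⟨hac, ?_⟩
  simp only [Equiv.Perm.mul_apply, Equiv.swap_apply_left,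
    Equiv.swap_apply_of_ne_of_ne (by omega : c ≠ a) (by omega : c ≠ b)]
  exact hcz

end Key

section Count
variable {u : Equiv.Perm ℕ} {a b : ℕ}

lemma lemmaA (hab : a < b) (hu : u a < u b) (hfin : {i | u i ≠ i}.Finite) :
    len u + 1 ≤ len (u * Equiv.swap a b) := by
  have hInv : (Inv u).Finite := inv_finite' hfin
  have hInv' : (Inv (u * Equiv.swap a b)).Finite := inv_finite' (support_mul_swap hfin)
  have himg : (keyMap a b '' Inv u).Finite := hInv.image _
  have hsub : insert (a, b) (keyMap a b '' Inv u) ⊆ Inv (u * Equiv.swap a b) := by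
    rintro p (rfl | ⟨q, hq, rfl⟩)
    · exact key_ab_mem hab hu
    · exact key_mem hab hu hq
  calc len u + 1 = (keyMap a b '' Inv u).ncard + 1 := by
        rw [len_eq, Set.ncard_image_of_injOn key_inj]
    _ = (insert (a, b) (keyMap a b '' Inv u)).ncard := by
        rw [Set.ncard_insert_of_notMem (key_ab_not_mem hab hu) himg]
    _ ≤ len (u * Equiv.swap a b) :=
        Set.ncard_le_ncard hsub hInv'

lemma lemmaA2 {c : ℕ} (hac : a < c) (hcb : c < b) (h1 : u a < u c) (h2 : u c < u b)
    (hfin : {i | u i ≠ i}.Finite) :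
    len u + 2 ≤ len (u * Equiv.swap a b) := by
  have hab : a < b := lt_trans hac hcb
  have hu : u a < u b := lt_trans h1 h2
  have hInv : (Inv u).Finite := inv_finite' hfin
  have hInv' : (Inv (u * Equiv.swap a b)).Finite := inv_finite' (support_mul_swap hfin)
  have himg : (keyMap a b '' Inv u).Finite := hInv.image _
  have hsub : insert (a, c) (insert (a, b) (keyMap a b '' Inv u)) ⊆ Inv (u * Equiv.swap a b) := by
    rintro p (rfl | rfl | ⟨q, hq, rfl⟩)
    · exact key_ac_mem hac hcb h2
    · exact key_ab_mem hab hu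
    · exact key_mem hab hu hq
  have hnc : (a, c) ∉ insert (a, b) (keyMap a b '' Inv u) := by
    rintro (he | he)
    · exact absurd (congrArg Prod.snd he) (by simp; omega)
    · exact key_ac_not_mem hac hcb h1 he
  calc len u + 2 = (keyMap a b '' Inv u).ncard + 1 + 1 := by
        rw [len_eq, Set.ncard_image_of_injOn key_inj]
    _ = (insert (a, b) (keyMap a b '' Inv u)).ncard + 1 := by
        rw [Set.ncard_insert_of_notMem (key_ab_not_mem hab hu) himg]
    _ = (insert (a, c) (insert (a, b) (keyMap a b '' Inv u))).ncard := by
        rw [Set.ncard_insert_of_notMem hnc (himg.insert _)]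
    _ ≤ len (u * Equiv.swap a b) :=
        Set.ncard_le_ncard hsub hInv'

/-- A Bruhat cover forces `u a < u b`. -/
lemma cover_lt (hab : a < b) (hfin : {i | u i ≠ i}.Finite)
    (hc : len (u * Equiv.swap a b) = len u + 1) : u a < u b := by
  by_contra hge
  push_neg at hge
  have hne : u b ≠ u a := fun h => by
    have := u.injective h
    omega
  have hlt : u b < u a := lt_of_le_of_ne hge hne
  set w := u * Equiv.swap a b with hw
  have hwa : w a = u b := by
    simp [hw, Equiv.Perm.mul_apply, Equiv.swap_apply_left]
  have hwb : w b = u a := by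
    simp [hw, Equiv.Perm.mul_apply, Equiv.swap_apply_right]
  have hwfin : {i | w i ≠ i}.Finite := support_mul_swap hfin
  have := lemmaA hab (by rw [hwa, hwb]; exact hlt) hwfin
  have hws : w * Equiv.swap a b = u := by
    rw [hw, mul_assoc, Equiv.swap_mul_self, mul_one]
  rw [hws, hc] at this
  omega

/-- The cover condition bounds `b`: if `u` fixes everything above `n ≥ k`,
then any cover label `(a,b)` with `a ≤ k < b` has `b ≤ n + 1`. -/
lemma bound_b {n k : ℕ} (hfa : FixAbove u n) (hkn : k ≤ n) (ha : 0 < a) (hak : a ≤ k)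
    (hkb : k < b) (hc : len (u * Equiv.swap a b) = len u + 1) : b ≤ n + 1 := by
  by_contra hb
  push_neg at hb
  set c := b - 1 with hcdef
  have hcn : n < c := by omega
  have hcb : c < b := by omega
  have hac : a < c := by omega
  have hua : u a ≤ n := apply_le hfa (by omega)
  have huc : u c = c := hfa c hcn
  have hub : u b = b := hfa b (by omega)
  have hfin : {i | u i ≠ i}.Finite := by
    apply Set.Finite.subset (Set.finite_Iic n)
    intro i hi
    simp only [Set.mem_setOf_eq] at hi
    simp only [Set.mem_Iic]
    by_contra hgt
    exact hi (hfa i (by omega))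
  have := lemmaA2 hac hcb (by omega : u a < u c) (by omega : u c < u b) hfin
  omega

end Count

section Chain

variable {k : ℕ} {v : Equiv.Perm ℕ} {L : List (ℕ × ℕ)}

lemma isKChain_step (hC : IsKChain k v L) {t : ℕ} (ht : t < L.length) :
    0 < (L.getD t (0,0)).1 ∧ (L.getD t (0,0)).1 ≤ k ∧ k < (L.getD t (0,0)).2 ∧
    len (chainEnd v (L.take t) * Equiv.swap (L.getD t (0,0)).1 (L.getD t (0,0)).2)
      = len (chainEnd v (L.take t)) + 1 := by
  induction L generalizing v t with
  | nil => simp at ht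
  | cons p tl ihL =>
    obtain ⟨h1, h2, h3, h4, h5⟩ := hC
    cases t with
    | zero => simpa [chainEnd] using ⟨h1, h2, h3, h4⟩
    | succ t => simpa [chainEnd] using ihL h5 (by simpa using ht)

lemma chainEnd_take_succ {t : ℕ} (ht : t < L.length) :
    chainEnd v (L.take (t+1))
      = chainEnd v (L.take t) * Equiv.swap (L.getD t (0,0)).1 (L.getD t (0,0)).2 := by
  induction L generalizing v t with
  | nil => simp at ht
  | cons p tl ihL =>
    cases t with
    | zero => simp [chainEnd]
    | succ t => simpa [chainEnd] using ihL (v := v * Equiv.swap p.1 p.2) (by simpa using ht)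

lemma chainEnd_support (hv : {i | v i ≠ i}.Finite) (L : List (ℕ × ℕ)) :
    {i | chainEnd v L i ≠ i}.Finite := by
  induction L generalizing v with
  | nil => exact hv
  | cons p tl ihL => exact ihL (support_mul_swap hv)

lemma len_chainEnd (hC : IsKChain k v L) : len (chainEnd v L) = len v + L.length := by
  induction L generalizing v with
  | nil => simp [chainEnd]
  | cons p tl ihL =>
    obtain ⟨h1, h2, h3, h4, h5⟩ := hC
    have := ihL h5
    simp only [chainEnd] at this ⊢
    rw [this, h4, List.length_cons]
    omega

lemma fixAbove_chainEnd {m : ℕ} (hC : IsKChain k v L) (hfa : FixAbove v m) (hkm : k < m)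
    (hb : ∀ p ∈ L, p.2 ≤ m) : FixAbove (chainEnd v L) m := by
  induction L generalizing v with
  | nil => exact hfa
  | cons p tl ihL =>
    obtain ⟨h1, h2, h3, h4, h5⟩ := hC
    have hpb : p.2 ≤ m := hb p (List.mem_cons_self)
    refine ihL h5 ?_ (fun q hq => hb q (List.mem_cons_of_mem _ hq))
    intro x hx
    rw [Equiv.Perm.mul_apply, Equiv.swap_apply_of_ne_of_ne (by omega) (by omega), hfa x hx]

lemma p1_mono (hP : CondP1 L) :
    ∀ i j : ℕ, i ≤ j → j < L.length → (L.getD j (0,0)).2 ≤ (L.getD i (0,0)).2 := by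
  intro i j hij
  induction j, hij using Nat.le_induction with
  | base => intro _; exact le_rfl
  | succ j hj ih => intro hlen; exact le_trans (hP j hlen) (ih (by omega))

lemma entry_b_bound {n : ℕ} (hC : IsKChain k v L) (hP : CondP1 L)
    (hfa : FixAbove v n) (hkn : k ≤ n) {t : ℕ} (ht : t < L.length) :
    (L.getD t (0,0)).2 ≤ n + 1 := by
  have h0 : (0 : ℕ) < L.length := by omega
  obtain ⟨ha0, hak, hkb, hcov⟩ := isKChain_step hC h0
  simp only [List.take_zero] at hcov
  have hb0 : (L.getD 0 (0,0)).2 ≤ n + 1 := by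
    exact bound_b (u := v) hfa hkn ha0 hak hkb (by simpa [chainEnd] using hcov)
  exact le_trans (p1_mono hP 0 t (Nat.zero_le t) ht) hb0

end Chain

section Main

variable {k : ℕ} {v : Equiv.Perm ℕ} {L : List (ℕ × ℕ)}

/-- In a chain satisfying (P1), no label repeats. -/
lemma no_repeat (hv : {i | v i ≠ i}.Finite) (hC : IsKChain k v L) (hP : CondP1 L) :
    ∀ i j, i < j → j < L.length → L.getD i (0,0) ≠ L.getD j (0,0) := by
  suffices H : ∀ d i j, j - i ≤ d → i < j → j < L.length →
      L.getD i (0,0) ≠ L.getD j (0,0) by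
    intro i j hij hj
    exact H (j - i) i j le_rfl hij hj
  intro d
  induction d with
  | zero => intro i j h hij _ _; omega
  | succ d ih =>
    intro i j hd hij hjlen heq
    set w : ℕ → Equiv.Perm ℕ := fun t => chainEnd v (L.take t) with hwdef
    set a := (L.getD i (0,0)).1 with hadef
    set b := (L.getD i (0,0)).2 with hbdef
    have hilen : i < L.length := lt_trans hij hjlen
    have hstepi := isKChain_step hC hilen
    have hab : a < b := by omega
    have hcov : ∀ t, t < L.length → w t (L.getD t (0,0)).1 < w t (L.getD t (0,0)).2 := by
      intro t ht
      obtain ⟨g1, g2, g3, g4⟩ := isKChain_step hC ht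
      exact cover_lt (by omega) (chainEnd_support hv _) g4
    have hsucc : ∀ t, t < L.length →
        w (t+1) = w t * Equiv.swap (L.getD t (0,0)).1 (L.getD t (0,0)).2 := by
      intro t ht
      exact chainEnd_take_succ ht
    have hbt : ∀ t, i ≤ t → t ≤ j → (L.getD t (0,0)).2 = b := by
      intro t h1 h2
      have e1 := p1_mono hP i t h1 (by omega)
      have e2 := p1_mono hP t j h2 hjlen
      rw [← heq] at e2
      omega
    have hat : ∀ t, i < t → t < j → (L.getD t (0,0)).1 ≠ a := by
      intro t h1 h2 hcon
      exact ih i t (by omega) h1 (by omega)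
        (Prod.ext hcon.symm (hbt t (by omega) (by omega)).symm)
    -- value at position a after step i stays u_i b
    have f1 : ∀ t, i + 1 ≤ t → t ≤ j → w t a = w i b := by
      intro t ht
      induction t, ht using Nat.le_induction with
      | base =>
        intro _
        rw [hsucc i hilen]
        simp only [Equiv.Perm.mul_apply, ← hadef, ← hbdef, Equiv.swap_apply_left]
      | succ t ht iht =>
        intro htj
        rw [hsucc t (by omega)]
        simp only [Equiv.Perm.mul_apply]
        rw [Equiv.swap_apply_of_ne_of_ne (Ne.symm (hat t (by omega) (by omega)))
          (by rw [hbt t (by omega) (by omega)]; omega)]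
        exact iht (by omega)
    -- value at position b strictly decreases
    have f2 : ∀ t, i + 1 ≤ t → t ≤ j → w t b < w i b := by
      intro t ht
      induction t, ht using Nat.le_induction with
      | base =>
        intro _
        rw [hsucc i hilen]
        simp only [Equiv.Perm.mul_apply, ← hadef, ← hbdef, Equiv.swap_apply_right]
        exact hcov i hilen
      | succ t ht iht =>
        intro htj
        rw [hsucc t (by omega)]
        simp only [Equiv.Perm.mul_apply]
        have hb2 : (L.getD t (0,0)).2 = b := hbt t (by omega) (by omega)
        rw [← hb2, Equiv.swap_apply_right, hb2]
        calc w t (L.getD t (0,0)).1 < w t (L.getD t (0,0)).2 := hcov t (by omega)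
          _ = w t b := by rw [hb2]
          _ < w i b := iht (by omega)
    have hcovj := hcov j hjlen
    rw [← heq] at hcovj
    have e1 := f1 j (by omega) le_rfl
    have e2 := f2 j (by omega) le_rfl
    rw [← hadef, ← hbdef] at hcovj
    omega

lemma finite_bounded_lists (T : Finset (ℕ × ℕ)) (N : ℕ) :
    {L : List (ℕ × ℕ) | L.length ≤ N ∧ ∀ p ∈ L, p ∈ T}.Finite := by
  have h := (List.finite_length_le {x // x ∈ T} N).image (List.map Subtype.val)
  apply Set.Finite.subset h
  rintro L ⟨hlen, hmem⟩
  refine ⟨L.pmap (fun p hp => (⟨p, hp⟩ : {x // x ∈ T})) hmem, ?_, ?_⟩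
  · simpa using hlen
  · simp [List.map_pmap]

end Main

end KB

/-- For a fixed `v ∈ S_∞` and `k ≥ 1`, the set of saturated chains in the `k`-Bruhat
order starting at `v` whose labels satisfy `b_1 ≥ b_2 ≥ ... ≥ b_q` (condition (P1)) is
finite; moreover, in such a chain no label can repeat. -/
theorem finitely_many_P1_chains (k : ℕ) (hk : 1 ≤ k) (v : Equiv.Perm ℕ)
    (hv : {i | v i ≠ i}.Finite) (hv0 : v 0 = 0) :
    {L : List (ℕ × ℕ) | IsKChain k v L ∧ CondP1 L}.Finite ∧
    ∀ L : List (ℕ × ℕ), IsKChain k v L → CondP1 L →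
      ∀ i j, i < j → j < L.length → L.getD i (0,0) ≠ L.getD j (0,0) := by
  constructor
  · obtain ⟨n, hkn, hfa⟩ := KB.exists_fixAbove hv k
    apply Set.Finite.subset
      (KB.finite_bounded_lists (Finset.range (k+1) ×ˢ Finset.range (n+2)) ((n+2)*(n+2)))
    rintro L ⟨hC, hP⟩
    have hent : ∀ p ∈ L, p.1 ≤ k ∧ p.2 ≤ n + 1 := by
      intro p hp
      obtain ⟨t, ht, rfl⟩ := List.mem_iff_getElem.mp hp
      have hgd : L.getD t (0,0) = L[t] := List.getD_eq_getElem L (0,0) ht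
      obtain ⟨g1, g2, g3, g4⟩ := KB.isKChain_step hC ht
      have hb := KB.entry_b_bound hC hP hfa hkn ht
      rw [hgd] at g2 hb
      exact ⟨g2, hb⟩
    constructor
    · have hfa' : KB.FixAbove v (n+1) := fun i hi => hfa i (by omega)
      have hend : KB.FixAbove (chainEnd v L) (n+1) :=
        KB.fixAbove_chainEnd hC hfa' (by omega) (fun p hp => (hent p hp).2)
    
      have hlen := KB.len_chainEnd hC
      have hle := KB.len_le hend
      have he : (n+1+1)*(n+1+1) = (n+2)*(n+2) := by ring
      omega
    · intro p hp
      obtain ⟨h1, h2⟩ := hent p hp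
      simp only [Finset.mem_product, Finset.mem_range]
      exact ⟨by omega, by omega⟩
  · intro L hC hP
    exact KB.no_repeat hv hC hP

end
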